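/- arXiv:2602.00386 — 9 statements merged into one kernel-verified Lean document; each statement's English description precedes it below -/
import Mathlib

section
/- Let A = CR be a full-rank factorization of a real m×n matrix A of rank r, where C is m×r with full column rank r and R is r×n with full row rank r. Then the r×r matrix CᵀARᵀ is invertible and the Moore–Penrose pseudoinverse of A is given by A⁺ = Rᵀ(CᵀARᵀ)⁻¹Cᵀ. -/
open Matrix

/-- If `C.mulVec` is injective (over ℝ) then `Cᵀ * C` is invertible. -/
lemma isUnit_transpose_mul_self_aux {k m : ℕ} (C : Matrix (Fin m) (Fin k) ℝ)
    (hinj : Function.Injective C.mulVec) : IsUnit (Cᵀ * C) := by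
  rw [← Matrix.mulVec_injective_iff_isUnit]
  intro x y hxy
  have hx : (Cᵀ * C) *ᵥ (x - y) = 0 := by
    rw [Matrix.mulVec_sub, hxy, sub_self]
  have h1 : (C *ᵥ (x - y)) ⬝ᵥ (C *ᵥ (x - y)) = 0 := by
    rw [Matrix.dotProduct_mulVec, ← Matrix.mulVec_transpose, Matrix.mulVec_mulVec, hx,
      zero_dotProduct]
  have h2 : C *ᵥ (x - y) = 0 := (dotProduct_self_eq_zero).mp h1
  have h3 : x - y = 0 := hinj (by simpa using h2)
  exact sub_eq_zero.mp h3


/-- `G` satisfies the four Penrose equations for `A`, i.e. `G` is the Moore–Penrose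
pseudoinverse of `A`. -/
def IsMoorePenrose {m n : ℕ} (A : Matrix (Fin m) (Fin n) ℝ)
    (G : Matrix (Fin n) (Fin m) ℝ) : Prop :=
  A * G * A = A ∧ G * A * G = G ∧ (A * G)ᵀ = A * G ∧ (G * A)ᵀ = G * A

/-- For a full-rank factorization `A = C * R` of a rank-`r` matrix `A`, the matrix
`Cᵀ * A * Rᵀ` is invertible and `A⁺ = Rᵀ * (Cᵀ * A * Rᵀ)⁻¹ * Cᵀ`. -/
theorem fullRank_factorization_pinv (m n r : ℕ)
    (A : Matrix (Fin m) (Fin n) ℝ)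
    (C : Matrix (Fin m) (Fin r) ℝ) (R : Matrix (Fin r) (Fin n) ℝ)
    (hA : A = C * R) (hrank : A.rank = r)
    (hC : LinearIndependent ℝ (fun j : Fin r => fun i : Fin m => C i j))
    (hR : LinearIndependent ℝ (fun i : Fin r => R i)) :
    IsUnit (Cᵀ * A * Rᵀ) ∧ IsMoorePenrose A (Rᵀ * (Cᵀ * A * Rᵀ)⁻¹ * Cᵀ) := by
  -- injectivity facts
  have hCinj : Function.Injective C.mulVec := by
    rw [Matrix.mulVec_injective_iff]
    exact hC
  have hRinj : Function.Injective (Rᵀ).mulVec := by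
    rw [Matrix.mulVec_injective_iff]
    exact hR
  have hP : IsUnit (Cᵀ * C) := isUnit_transpose_mul_self_aux C hCinj
  have hQ : IsUnit (R * Rᵀ) := by
    have := isUnit_transpose_mul_self_aux Rᵀ hRinj
    simpa using this
  have hPd := (Matrix.isUnit_iff_isUnit_det _).mp hP
  have hQd := (Matrix.isUnit_iff_isUnit_det _).mp hQ
  have hPi : (Cᵀ * C) * (Cᵀ * C)⁻¹ = 1 := Matrix.mul_nonsing_inv _ hPd
  have hPi' : (Cᵀ * C)⁻¹ * (Cᵀ * C) = 1 := Matrix.nonsing_inv_mul _ hPd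
  have hQi : (R * Rᵀ) * (R * Rᵀ)⁻¹ = 1 := Matrix.mul_nonsing_inv _ hQd
  have hQi' : (R * Rᵀ)⁻¹ * (R * Rᵀ) = 1 := Matrix.nonsing_inv_mul _ hQd
  have hKey : Cᵀ * A * Rᵀ = (Cᵀ * C) * (R * Rᵀ) := by
    rw [hA]; simp only [Matrix.mul_assoc]
  have hInv : (Cᵀ * A * Rᵀ)⁻¹ = (R * Rᵀ)⁻¹ * (Cᵀ * C)⁻¹ := by
    rw [hKey, Matrix.mul_inv_rev]
  have e1 : ∀ (p : ℕ) (X : Matrix (Fin r) (Fin p) ℝ), Cᵀ * (C * ((Cᵀ * C)⁻¹ * X)) = X := by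
    intro p X
    rw [← Matrix.mul_assoc, ← Matrix.mul_assoc, hPi, Matrix.one_mul]
  have e2 : ∀ (p : ℕ) (X : Matrix (Fin r) (Fin p) ℝ), (Cᵀ * C)⁻¹ * (Cᵀ * (C * X)) = X := by
    intro p X
    rw [← Matrix.mul_assoc Cᵀ C X, ← Matrix.mul_assoc, hPi', Matrix.one_mul]
  have e3 : ∀ (p : ℕ) (X : Matrix (Fin r) (Fin p) ℝ), R * (Rᵀ * ((R * Rᵀ)⁻¹ * X)) = X := by
    intro p X
    rw [← Matrix.mul_assoc, ← Matrix.mul_assoc, hQi, Matrix.one_mul]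
  have e4 : ∀ (p : ℕ) (X : Matrix (Fin r) (Fin p) ℝ), (R * Rᵀ)⁻¹ * (R * (Rᵀ * X)) = X := by
    intro p X
    rw [← Matrix.mul_assoc R Rᵀ X, ← Matrix.mul_assoc, hQi', Matrix.one_mul]
  refine ⟨by rw [hKey]; exact hP.mul hQ, ?_, ?_, ?_, ?_⟩
  · -- A * G * A = A
    rw [hInv, hA]
    simp only [Matrix.mul_assoc, e3, e2]
  · -- G * A * G = G
    rw [hInv, hA]
    simp only [Matrix.mul_assoc, e3, e2]
  · -- (A*G)ᵀ = A*G
    have hAG : A * (Rᵀ * (Cᵀ * A * Rᵀ)⁻¹ * Cᵀ) = C * ((Cᵀ * C)⁻¹ * Cᵀ) := by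
      rw [hInv, hA]; simp only [Matrix.mul_assoc, e3]
    rw [hAG, Matrix.transpose_mul, Matrix.transpose_mul, Matrix.transpose_transpose,
      Matrix.transpose_nonsing_inv, Matrix.transpose_mul, Matrix.transpose_transpose,
      Matrix.mul_assoc]
  · -- (G*A)ᵀ = G*A
    have hGA : (Rᵀ * (Cᵀ * A * Rᵀ)⁻¹ * Cᵀ) * A = Rᵀ * ((R * Rᵀ)⁻¹ * R) := by
      rw [hInv, hA]; simp only [Matrix.mul_assoc, e2]
    rw [hGA, Matrix.transpose_mul, Matrix.transpose_mul, Matrix.transpose_transpose,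
      Matrix.transpose_nonsing_inv, Matrix.transpose_mul, Matrix.transpose_transpose,
      Matrix.mul_assoc]
end

section
/- (Greville's conditions.) Let C be a real m×r matrix and R a real r×n matrix. Then the reverse order law (CR)⁺ = R⁺C⁺ holds if and only if the column space of RRᵀCᵀ is contained in the column space of Cᵀ and the column space of CᵀCR is contained in the column space of R. -/
open Matrix

/-- The Moore–Penrose pseudoinverse is unique. -/
theorem mp_unique {m n : ℕ} {A : Matrix (Fin m) (Fin n) ℝ}
    {G H : Matrix (Fin n) (Fin m) ℝ}
    (hG : IsMoorePenrose A G) (hH : IsMoorePenrose A H) : G = H := by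
  obtain ⟨g1, g2, g3, g4⟩ := hG
  obtain ⟨h1, h2, h3, h4⟩ := hH
  have hAG : A * G = A * H := by
    calc A * G = (A * G)ᵀ := g3.symm
      _ = ((A * H * A) * G)ᵀ := by rw [h1]
      _ = ((A * H) * (A * G))ᵀ := by rw [Matrix.mul_assoc (A * H) A G]
      _ = (A * G)ᵀ * (A * H)ᵀ := by rw [Matrix.transpose_mul]
      _ = (A * G) * (A * H) := by rw [g3, h3]
      _ = (A * G * A) * H := by rw [Matrix.mul_assoc (A * G) A H]
      _ = A * H := by rw [g1]
  have hGA : G * A = H * A := by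
    calc G * A = (G * A)ᵀ := g4.symm
      _ = (G * (A * H * A))ᵀ := by rw [h1]
      _ = ((G * A) * (H * A))ᵀ := by
            rw [Matrix.mul_assoc A H A, ← Matrix.mul_assoc G A (H * A)]
      _ = (H * A)ᵀ * (G * A)ᵀ := by rw [Matrix.transpose_mul]
      _ = (H * A) * (G * A) := by rw [g4, h4]
      _ = H * (A * G * A) := by
            rw [Matrix.mul_assoc A G A, ← Matrix.mul_assoc H A (G * A)]
      _ = H * A := by rw [g1]
  calc G = G * A * G := g2.symm
    _ = (H * A) * G := by rw [hGA]
    _ = H * (A * G) := by rw [Matrix.mul_assoc]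
    _ = H * (A * H) := by rw [hAG]
    _ = H * A * H := by rw [Matrix.mul_assoc]
    _ = H := h2

theorem mat_ext_mulVec {a b : ℕ} {M N : Matrix (Fin a) (Fin b) ℝ}
    (h : ∀ x, M *ᵥ x = N *ᵥ x) : M = N := by
  rw [← Matrix.transpose_inj]
  funext j
  exact funext fun i => by simpa using congrFun (h (Pi.single j 1)) i

/-- Column space inclusion characterized by a projector equation. -/
theorem range_le_iff {a b c : ℕ} (N : Matrix (Fin a) (Fin b) ℝ)
    (K : Matrix (Fin b) (Fin a) ℝ) (M : Matrix (Fin a) (Fin c) ℝ)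
    (hNKN : N * K * N = N) :
    LinearMap.range M.mulVecLin ≤ LinearMap.range N.mulVecLin ↔ N * K * M = M := by
  constructor
  · intro h
    apply mat_ext_mulVec
    intro x
    obtain ⟨y, hy⟩ := h ⟨x, rfl⟩
    simp only [Matrix.mulVecLin_apply] at hy
    calc (N * K * M) *ᵥ x = (N * K) *ᵥ (M *ᵥ x) := by rw [← Matrix.mulVec_mulVec]
      _ = (N * K) *ᵥ (N *ᵥ y) := by rw [hy]
      _ = (N * K * N) *ᵥ y := by rw [Matrix.mulVec_mulVec]
      _ = N *ᵥ y := by rw [hNKN]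
      _ = M *ᵥ x := hy
  · intro h
    rw [← h, Matrix.mul_assoc, Matrix.mulVecLin_mul]
    exact LinearMap.range_comp_le_range _ _

theorem tmul_eq_zero {a b : ℕ} {M : Matrix (Fin a) (Fin b) ℝ}
    (h : Mᵀ * M = 0) : M = 0 := by
  have hH : Mᴴ = Mᵀ := by ext i j; simp [Matrix.conjTranspose_apply]
  exact Matrix.conjTranspose_mul_self_eq_zero.mp (by rw [hH]; exact h)

theorem mulA2 {a1 a2 a3 a4 : ℕ} {X : Matrix (Fin a1) (Fin a2) ℝ}
    {Y : Matrix (Fin a2) (Fin a3) ℝ} {W : Matrix (Fin a1) (Fin a3) ℝ}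
    (h : X * Y = W) (T : Matrix (Fin a3) (Fin a4) ℝ) :
    X * (Y * T) = W * T := by rw [← Matrix.mul_assoc, h]

theorem mulA3 {a1 a2 a3 a4 a5 : ℕ} {X : Matrix (Fin a1) (Fin a2) ℝ}
    {Y : Matrix (Fin a2) (Fin a3) ℝ} {Z : Matrix (Fin a3) (Fin a4) ℝ}
    {W : Matrix (Fin a1) (Fin a4) ℝ} (h : X * Y * Z = W)
    (T : Matrix (Fin a4) (Fin a5) ℝ) :
    X * (Y * (Z * T)) = W * T := by
  rw [← Matrix.mul_assoc, ← Matrix.mul_assoc, h]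

theorem mulA3' {a1 a2 a3 a4 : ℕ} {X : Matrix (Fin a1) (Fin a2) ℝ}
    {Y : Matrix (Fin a2) (Fin a3) ℝ} {Z : Matrix (Fin a3) (Fin a4) ℝ}
    {W : Matrix (Fin a1) (Fin a4) ℝ} (h : X * Y * Z = W) :
    X * (Y * Z) = W := by rw [← Matrix.mul_assoc, h]

theorem mulB3 {a1 a2 a3 a4 b2 b3 a5 : ℕ} {X : Matrix (Fin a1) (Fin a2) ℝ}
    {Y : Matrix (Fin a2) (Fin a3) ℝ} {Z : Matrix (Fin a3) (Fin a4) ℝ}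
    {X' : Matrix (Fin a1) (Fin b2) ℝ} {Y' : Matrix (Fin b2) (Fin b3) ℝ}
    {Z' : Matrix (Fin b3) (Fin a4) ℝ}
    (h : X * Y * Z = X' * Y' * Z') (T : Matrix (Fin a4) (Fin a5) ℝ) :
    X * (Y * (Z * T)) = X' * (Y' * (Z' * T)) := by
  simpa only [Matrix.mul_assoc] using congrArg (· * T) h

/-- If `X = P Q X` with `P, Q` symmetric idempotents, then `Q X = X`. -/
theorem proj_absorb {a b : ℕ} {P Q : Matrix (Fin a) (Fin a) ℝ}
    {X : Matrix (Fin a) (Fin b) ℝ}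
    (hPs : Pᵀ = P) (hQs : Qᵀ = Q) (hP2 : P * P = P) (hQ2 : Q * Q = Q)
    (hX : X = P * (Q * X)) : Q * X = X := by
  have hQX : Q * X = Q * (P * (Q * X)) := by conv_lhs => rw [hX]
  have hXX : Xᵀ * X = Xᵀ * (Q * (P * (Q * X))) := by
    calc Xᵀ * X = (P * (Q * X))ᵀ * (P * (Q * X)) := by conv_lhs => rw [hX]
      _ = ((Q * X)ᵀ * Pᵀ) * (P * (Q * X)) := by rw [Matrix.transpose_mul]
      _ = ((Xᵀ * Qᵀ) * Pᵀ) * (P * (Q * X)) := by rw [Matrix.transpose_mul]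
      _ = Xᵀ * (Q * ((P * P) * (Q * X))) := by
            rw [hPs, hQs]; simp only [Matrix.mul_assoc]
      _ = Xᵀ * (Q * (P * (Q * X))) := by rw [hP2]
  have h1 : Xᵀ * (Q * X) = Xᵀ * X := by rw [hQX, hXX]
  have hD : (X - Q * X)ᵀ * (X - Q * X) = 0 := by
    rw [Matrix.transpose_sub, Matrix.transpose_mul, hQs, Matrix.sub_mul, Matrix.mul_sub, Matrix.mul_sub,
      Matrix.mul_assoc Xᵀ Q X, Matrix.mul_assoc Xᵀ Q (Q * X),
      ← Matrix.mul_assoc Q Q X, hQ2, h1]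
    simp
  have hz : X - Q * X = 0 := tmul_eq_zero hD
  exact (sub_eq_zero.mp hz).symm

/-- From `P (S P) = S P` with `P, S` symmetric, conclude `P S = S P`. -/
theorem comm_of_sandwich {a : ℕ} {P S : Matrix (Fin a) (Fin a) ℝ}
    (hPs : Pᵀ = P) (hSs : Sᵀ = S) (h : P * (S * P) = S * P) : P * S = S * P := by
  have ht : (S * P)ᵀ = P * S := by rw [Matrix.transpose_mul, hPs, hSs]
  calc P * S = (S * P)ᵀ := ht.symm
    _ = (P * (S * P))ᵀ := by rw [h]
    _ = (S * P)ᵀ * Pᵀ := by rw [Matrix.transpose_mul]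
    _ = (P * S) * P := by rw [ht, hPs]
    _ = P * (S * P) := by rw [Matrix.mul_assoc]
    _ = S * P := h

theorem greville_key {m r n : ℕ}
    (C : Matrix (Fin m) (Fin r) ℝ) (R : Matrix (Fin r) (Fin n) ℝ)
    (Cp : Matrix (Fin r) (Fin m) ℝ) (Rp : Matrix (Fin n) (Fin r) ℝ)
    (hCp : IsMoorePenrose C Cp) (hRp : IsMoorePenrose R Rp) :
    IsMoorePenrose (C * R) (Rp * Cp) ↔
      (Cp * C * (R * Rᵀ * Cᵀ) = R * Rᵀ * Cᵀ ∧
       R * Rp * (Cᵀ * C * R) = Cᵀ * C * R) := by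
  obtain ⟨c1, c2, c3, c4⟩ := hCp
  obtain ⟨r1, r2, r3, r4⟩ := hRp
  -- basic identities
  have w1 : Cᵀ * Cpᵀ = Cp * C := by rw [← Matrix.transpose_mul, c4]
  have w2 : Rpᵀ * Rᵀ = R * Rp := by rw [← Matrix.transpose_mul, r3]
  have bC3 : Cᵀ * C * Cp = Cᵀ := by
    rw [Matrix.mul_assoc, ← c3, ← Matrix.transpose_mul, c1]
  have bC4 : Cpᵀ * Cᵀ * C = C := by rw [← Matrix.transpose_mul, c3, c1]
  have bC5 : Cp * C * Cᵀ = Cᵀ := by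
    rw [← c4, ← Matrix.transpose_mul, ← Matrix.mul_assoc, c1]
  have bR5 : Rp * R * Rᵀ = Rᵀ := by
    rw [← r4, ← Matrix.transpose_mul, ← Matrix.mul_assoc, r1]
  have bR6 : R * Rᵀ * Rpᵀ = R := by
    rw [Matrix.mul_assoc, ← Matrix.transpose_mul, r4, ← Matrix.mul_assoc, r1]
  have bR7 : Rp * Rpᵀ * Rᵀ = Rp := by
    rw [Matrix.mul_assoc, ← Matrix.transpose_mul, r3, ← Matrix.mul_assoc, r2]
  have iP : (Cp * C) * (Cp * C) = Cp * C := by rw [← Matrix.mul_assoc, c2]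
  have iQ : (R * Rp) * (R * Rp) = R * Rp := by rw [← Matrix.mul_assoc, r1]
  constructor
  · rintro ⟨e1, _, e3, e4⟩
    have e1' : C * (R * (Rp * (Cp * (C * R)))) = C * R := by
      simpa only [Matrix.mul_assoc] using e1
    have f3 : Cpᵀ * (Rpᵀ * (Rᵀ * Cᵀ)) = C * (R * (Rp * Cp)) := by
      simpa only [Matrix.transpose_mul, Matrix.mul_assoc] using e3
    have f4 : Rᵀ * (Cᵀ * (Cpᵀ * Rpᵀ)) = Rp * (Cp * (C * R)) := by
      simpa only [Matrix.transpose_mul, Matrix.mul_assoc] using e4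
    constructor
    · -- column space of R Rᵀ Cᵀ inside that of Cᵀ
      have e1t : Rᵀ * (Cᵀ * (Cpᵀ * (Rpᵀ * (Rᵀ * Cᵀ)))) = Rᵀ * Cᵀ := by
        simpa only [Matrix.transpose_mul, Matrix.mul_assoc]
          using congrArg Matrix.transpose e1
      have G1' : (R * Rᵀ) * ((Cp * C) * ((R * Rp) * Cᵀ)) = R * Rᵀ * Cᵀ := by
        simpa only [Matrix.mul_assoc, mulA2 w1, mulA2 w2, w1, w2]
          using congrArg (R * ·) e1t
      have F4m : (R * Rᵀ) * (Cp * C) * (R * Rp) = (R * Rp) * (Cp * C) * (R * Rᵀ) := by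
        have F4a := congrArg (fun M => R * (M * Rᵀ)) f4
        simpa only [Matrix.mul_assoc, mulA2 w1, mulA2 w2, w1, w2] using F4a
      have hY : R * Rᵀ * Cᵀ = (R * Rp) * ((Cp * C) * (R * Rᵀ * Cᵀ)) := by
        conv_lhs => rw [← G1']
        rw [mulB3 F4m Cᵀ]
      exact proj_absorb r3 c4 iQ iP hY
    · -- column space of Cᵀ C R inside that of R
      have G1 : (Cᵀ * C) * ((R * Rp) * ((Cp * C) * R)) = Cᵀ * C * R := by
        simpa only [Matrix.mul_assoc] using congrArg (Cᵀ * ·) e1'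
      have F3m : (Cᵀ * C) * (R * Rp) * (Cp * C) = (Cp * C) * (R * Rp) * (Cᵀ * C) := by
        have F3a := congrArg (fun M => Cᵀ * (M * C)) f3
        simpa only [Matrix.mul_assoc, mulA2 w1, mulA2 w2, w1, w2] using F3a.symm
      have hX : Cᵀ * C * R = (Cp * C) * ((R * Rp) * (Cᵀ * C * R)) := by
        conv_lhs => rw [← G1]
        rw [mulB3 F3m R]
      exact proj_absorb c4 r3 iP iQ hX
  · rintro ⟨gh1, gh2⟩
    have sS : (Cᵀ * C)ᵀ = Cᵀ * C := by
      rw [Matrix.transpose_mul, Matrix.transpose_transpose]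
    have sT : (R * Rᵀ)ᵀ = R * Rᵀ := by
      rw [Matrix.transpose_mul, Matrix.transpose_transpose]
    -- commutation relations
    have u1 : (R * Rp) * ((Cᵀ * C) * (R * Rp)) = (Cᵀ * C) * (R * Rp) := by
      simpa only [Matrix.mul_assoc] using congrArg (· * Rp) gh2
    have hQS : (R * Rp) * (Cᵀ * C) = (Cᵀ * C) * (R * Rp) :=
      comm_of_sandwich r3 sS u1
    have v1 : (Cp * C) * ((R * Rᵀ) * (Cp * C)) = (R * Rᵀ) * (Cp * C) := by
      simpa only [Matrix.mul_assoc, mulA2 w1, w1] using congrArg (· * Cpᵀ) gh1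
    have hPT : (Cp * C) * (R * Rᵀ) = (R * Rᵀ) * (Cp * C) :=
      comm_of_sandwich c4 sT v1
    -- key absorption identities
    have hCQ : C * (R * Rp) = Cpᵀ * ((R * Rp) * (Cᵀ * C)) := by
      rw [hQS]
      calc C * (R * Rp) = (Cpᵀ * Cᵀ * C) * (R * Rp) := by rw [bC4]
        _ = Cpᵀ * ((Cᵀ * C) * (R * Rp)) := by simp only [Matrix.mul_assoc]
    have star1 : (C * (R * Rp)) * (Cp * C) = C * (R * Rp) := by
      calc (C * (R * Rp)) * (Cp * C)
          = (Cpᵀ * ((R * Rp) * (Cᵀ * C))) * (Cp * C) := by rw [hCQ]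
        _ = Cpᵀ * ((R * Rp) * (Cᵀ * (C * (Cp * C)))) := by
              simp only [Matrix.mul_assoc]
        _ = Cpᵀ * ((R * Rp) * (Cᵀ * C)) := by
              rw [mulA3 bC3 C]
        _ = C * (R * Rp) := hCQ.symm
    have hPR : (Cp * C) * R = (R * Rᵀ) * ((Cp * C) * Rpᵀ) := by
      conv_lhs => rw [← bR6]
      calc (Cp * C) * (R * Rᵀ * Rpᵀ)
          = ((Cp * C) * (R * Rᵀ)) * Rpᵀ := by simp only [Matrix.mul_assoc]
        _ = ((R * Rᵀ) * (Cp * C)) * Rpᵀ := by rw [hPT]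
        _ = (R * Rᵀ) * ((Cp * C) * Rpᵀ) := by rw [Matrix.mul_assoc]
    have star2 : (R * Rp) * ((Cp * C) * R) = (Cp * C) * R := by
      calc (R * Rp) * ((Cp * C) * R)
          = (R * Rp) * ((R * Rᵀ) * ((Cp * C) * Rpᵀ)) := by rw [hPR]
        _ = R * (Rp * (R * (Rᵀ * ((Cp * C) * Rpᵀ)))) := by
              simp only [Matrix.mul_assoc]
        _ = R * (Rᵀ * ((Cp * C) * Rpᵀ)) := by rw [mulA3 r1]
        _ = (R * Rᵀ) * ((Cp * C) * Rpᵀ) := by simp only [Matrix.mul_assoc]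
        _ = (Cp * C) * R := hPR.symm
    refine ⟨?_, ?_, ?_, ?_⟩
    · -- A G A = A
      calc (C * R) * (Rp * Cp) * (C * R)
          = ((C * (R * Rp)) * (Cp * C)) * R := by simp only [Matrix.mul_assoc]
        _ = (C * (R * Rp)) * R := by rw [star1]
        _ = C * (R * (Rp * R)) := by simp only [Matrix.mul_assoc]
        _ = C * R := by rw [mulA3' r1]
    · -- G A G = G
      have tr2 : (Rᵀ * (Cp * C)) * (R * Rp) = Rᵀ * (Cp * C) := by
        simpa only [Matrix.transpose_mul, Matrix.mul_assoc, c4, r3,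
          Matrix.transpose_transpose, mulA2 w1, mulA2 w2, w1, w2]
          using congrArg Matrix.transpose star2
      have key2 : Rp * (Cp * (C * (R * Rp))) = Rp * (Cp * C) := by
        simpa only [Matrix.mul_assoc, mulA3 bR7]
          using congrArg (fun M => Rp * (Rpᵀ * M)) tr2
      calc (Rp * Cp) * (C * R) * (Rp * Cp)
          = (Rp * (Cp * (C * (R * Rp)))) * Cp := by simp only [Matrix.mul_assoc]
        _ = (Rp * (Cp * C)) * Cp := by rw [key2]
        _ = Rp * (Cp * (C * Cp)) := by simp only [Matrix.mul_assoc]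
        _ = Rp * Cp := by rw [mulA3' c2]
    · -- (A G)ᵀ = A G
      have claim : Cpᵀ * ((R * Rp) * Cᵀ) = (C * (R * Rp)) * Cp := by
        conv_lhs => rw [← bC3]
        calc Cpᵀ * ((R * Rp) * (Cᵀ * C * Cp))
            = (Cpᵀ * ((R * Rp) * (Cᵀ * C))) * Cp := by simp only [Matrix.mul_assoc]
          _ = (C * (R * Rp)) * Cp := by rw [← hCQ]
      calc ((C * R) * (Rp * Cp))ᵀ
          = Cpᵀ * ((R * Rp) * Cᵀ) := by
            simp only [Matrix.transpose_mul, Matrix.mul_assoc, mulA2 w2, w2]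
        _ = (C * (R * Rp)) * Cp := claim
        _ = (C * R) * (Rp * Cp) := by simp only [Matrix.mul_assoc]
    · -- (G A)ᵀ = G A
      have bR9 : Rp * (R * Rᵀ) = Rᵀ := by rw [← Matrix.mul_assoc, bR5]
      have claim : Rᵀ * ((Cp * C) * Rpᵀ) = Rp * ((Cp * C) * R) := by
        conv_lhs => rw [← bR9]
        calc (Rp * (R * Rᵀ)) * ((Cp * C) * Rpᵀ)
            = Rp * ((R * Rᵀ) * ((Cp * C) * Rpᵀ)) := by simp only [Matrix.mul_assoc]
          _ = Rp * ((Cp * C) * R) := by rw [← hPR]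
      calc ((Rp * Cp) * (C * R))ᵀ
          = Rᵀ * ((Cp * C) * Rpᵀ) := by
            simp only [Matrix.transpose_mul, Matrix.mul_assoc, mulA2 w1, w1]
        _ = Rp * ((Cp * C) * R) := claim
        _ = (Rp * Cp) * (C * R) := by simp only [Matrix.mul_assoc]

/-- Greville's conditions: the reverse order law `(C * R)⁺ = R⁺ * C⁺` holds if and only if
the column space of `R * Rᵀ * Cᵀ` is contained in the column space of `Cᵀ` and the column
space of `Cᵀ * C * R` is contained in the column space of `R`. -/
theorem greville_conditions (m r n : ℕ)
    (C : Matrix (Fin m) (Fin r) ℝ) (R : Matrix (Fin r) (Fin n) ℝ)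
    (Ap : Matrix (Fin n) (Fin m) ℝ)
    (Cp : Matrix (Fin r) (Fin m) ℝ) (Rp : Matrix (Fin n) (Fin r) ℝ)
    (hAp : IsMoorePenrose (C * R) Ap)
    (hCp : IsMoorePenrose C Cp) (hRp : IsMoorePenrose R Rp) :
    Ap = Rp * Cp ↔
      (LinearMap.range (R * Rᵀ * Cᵀ).mulVecLin ≤ LinearMap.range Cᵀ.mulVecLin ∧
       LinearMap.range (Cᵀ * C * R).mulVecLin ≤ LinearMap.range R.mulVecLin) := by
  obtain ⟨c1, c2, c3, c4⟩ := hCp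
  have w1 : Cᵀ * Cpᵀ = Cp * C := by rw [← Matrix.transpose_mul, c4]
  have bC5 : Cp * C * Cᵀ = Cᵀ := by
    rw [← c4, ← Matrix.transpose_mul, ← Matrix.mul_assoc, c1]
  have hCt : Cᵀ * Cpᵀ * Cᵀ = Cᵀ := by rw [w1, bC5]
  rw [range_le_iff Cᵀ Cpᵀ _ hCt, range_le_iff R Rp _ hRp.1, w1]
  constructor
  · intro h
    exact (greville_key C R Cp Rp ⟨c1, c2, c3, c4⟩ hRp).mp (h ▸ hAp)
  · intro h
    exact mp_unique hAp ((greville_key C R Cp Rp ⟨c1, c2, c3, c4⟩ hRp).mpr h)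
end

section
/- (Penrose.) Let A be a real m×n matrix, C̄ a real m×p matrix, and R̄ a real q×n matrix. Let G be any {1}-inverse of C̄ (i.e. C̄GC̄ = C̄) and H any {1}-inverse of R̄ (i.e. R̄HR̄ = R̄). Then the matrix equation C̄XR̄ = A has a solution X (a p×q matrix) if and only if (C̄G)A(HR̄) = A, and in that case the solutions are exactly the matrices X = GAH + Z − (GC̄)Z(R̄H), where Z ranges over all p×q matrices. -/
open Matrix

/-- Penrose: given `{1}`-inverses `G` of `C̄` and `H` of `R̄`, the matrix equation
`C̄ * X * R̄ = A` has a solution iff `(C̄ * G) * A * (H * R̄) = A`, in which case the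
solutions are exactly the matrices `X = G * A * H + Z - (G * C̄) * Z * (R̄ * H)`. -/
theorem penrose_linear_matrix_equation (m n p q : ℕ)
    (A : Matrix (Fin m) (Fin n) ℝ)
    (Cb : Matrix (Fin m) (Fin p) ℝ) (Rb : Matrix (Fin q) (Fin n) ℝ)
    (G : Matrix (Fin p) (Fin m) ℝ) (H : Matrix (Fin n) (Fin q) ℝ)
    (hG : Cb * G * Cb = Cb) (hH : Rb * H * Rb = Rb) :
    ((∃ X : Matrix (Fin p) (Fin q) ℝ, Cb * X * Rb = A) ↔
        (Cb * G) * A * (H * Rb) = A) ∧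
      ((Cb * G) * A * (H * Rb) = A →
        ∀ X : Matrix (Fin p) (Fin q) ℝ,
          Cb * X * Rb = A ↔
            ∃ Z : Matrix (Fin p) (Fin q) ℝ,
              X = G * A * H + Z - (G * Cb) * Z * (Rb * H)) := by
  constructor
  · constructor
    · rintro ⟨X, rfl⟩
      calc Cb * G * (Cb * X * Rb) * (H * Rb)
          = (Cb * G * Cb) * X * (Rb * H * Rb) := by
            simp only [Matrix.mul_assoc]
        _ = Cb * X * Rb := by rw [hG, hH]
    · intro h
      exact ⟨G * A * H, by
        calc Cb * (G * A * H) * Rb = Cb * G * A * (H * Rb) := by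
              simp only [Matrix.mul_assoc]
          _ = A := h⟩
  · intro hA X
    constructor
    · intro hX
      refine ⟨X, ?_⟩
      have : G * Cb * X * (Rb * H) = G * A * H := by
        calc G * Cb * X * (Rb * H) = G * (Cb * X * Rb) * H := by
              simp only [Matrix.mul_assoc]
          _ = G * A * H := by rw [hX]
      rw [this]; abel
    · rintro ⟨Z, rfl⟩
      have h1 : Cb * (G * A * H) * Rb = A := by
        calc Cb * (G * A * H) * Rb = Cb * G * A * (H * Rb) := by
              simp only [Matrix.mul_assoc]
          _ = A := hA
      have h2 : Cb * (G * Cb * Z * (Rb * H)) * Rb = Cb * Z * Rb := by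
        calc Cb * (G * Cb * Z * (Rb * H)) * Rb
            = (Cb * G * Cb) * Z * (Rb * H * Rb) := by
              simp only [Matrix.mul_assoc]
          _ = Cb * Z * Rb := by rw [hG, hH]
      calc Cb * (G * A * H + Z - G * Cb * Z * (Rb * H)) * Rb
          = Cb * (G * A * H) * Rb + Cb * Z * Rb - Cb * (G * Cb * Z * (Rb * H)) * Rb := by
            simp only [Matrix.mul_add, Matrix.mul_sub, Matrix.add_mul, Matrix.sub_mul]
        _ = A := by rw [h1, h2]; abel
end

section
/- Let M and N be real symmetric positive semidefinite n×n matrices with M ⪯ N in the Löwner order (i.e. N − M is positive semidefinite), and let d be a vector in the column space of M. Then dᵀ N⁺ d ≤ dᵀ M⁺ d, where M⁺ and N⁺ denote Moore–Penrose pseudoinverses. -/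
open Matrix

/-- Move a symmetric matrix across a dot product. -/
lemma symm_dot_move {n : ℕ} {A : Matrix (Fin n) (Fin n) ℝ} (hA : Aᵀ = A)
    (v w : Fin n → ℝ) : v ⬝ᵥ A.mulVec w = (A.mulVec v) ⬝ᵥ w := by
  rw [Matrix.dotProduct_mulVec, ← Matrix.mulVec_transpose, hA]

/-- If `M ⪯ N` in the Löwner order (both symmetric positive semidefinite) and `d` lies in
the column space of `M`, then `dᵀ N⁺ d ≤ dᵀ M⁺ d`. -/
theorem pinv_quadratic_form_antitone (n : ℕ)
    (M N : Matrix (Fin n) (Fin n) ℝ)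
    (hM : M.PosSemidef) (hN : N.PosSemidef) (hMN : (N - M).PosSemidef)
    (Mp Np : Matrix (Fin n) (Fin n) ℝ)
    (hMp : IsMoorePenrose M Mp) (hNp : IsMoorePenrose N Np)
    (d : Fin n → ℝ) (hd : d ∈ LinearMap.range M.mulVecLin) :
    d ⬝ᵥ Np.mulVec d ≤ d ⬝ᵥ Mp.mulVec d := by
  obtain ⟨x, hx⟩ := hd
  rw [Matrix.mulVecLin_apply] at hx
  have hMs : Mᵀ = M := by simpa using hM.1.eq
  have hNs : Nᵀ = N := by simpa using hN.1.eq
  -- Step A : M (Mp d) = d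
  have stepA : M.mulVec (Mp.mulVec d) = d := by
    rw [← hx, Matrix.mulVec_mulVec, Matrix.mulVec_mulVec, hMp.1]
  -- Step B : d is orthogonal to ker N
  have stepB : ∀ v : Fin n → ℝ, N.mulVec v = 0 → d ⬝ᵥ v = 0 := by
    intro v hv
    have h1 : v ⬝ᵥ N.mulVec v = 0 := by rw [hv, dotProduct_zero]
    have h2 : 0 ≤ v ⬝ᵥ M.mulVec v := by simpa using hM.dotProduct_mulVec_nonneg v
    have h3 : 0 ≤ v ⬝ᵥ (N - M).mulVec v := by simpa using hMN.dotProduct_mulVec_nonneg v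
    have h4 : v ⬝ᵥ (N - M).mulVec v = v ⬝ᵥ N.mulVec v - v ⬝ᵥ M.mulVec v := by
      rw [Matrix.sub_mulVec, dotProduct_sub]
    have h5 : v ⬝ᵥ M.mulVec v = 0 := by linarith [h3, h2, h4.symm ▸ h3]
    have h6 : M.mulVec v = 0 := by
      have := (hM.dotProduct_mulVec_zero_iff v).mp (by simpa using h5)
      simpa using this
    rw [← hx, ← symm_dot_move hMs, h6, dotProduct_zero]
  -- Step C : N (Np d) = d
  have stepC : N.mulVec (Np.mulVec d) = d := by
    set P : Matrix (Fin n) (Fin n) ℝ := N * Np with hPdef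
    have hPs : Pᵀ = P := hNp.2.2.1
    have hPN : P * N = N := hNp.1
    have hPP : P * P = P := by
      rw [hPdef, ← Matrix.mul_assoc, hNp.1]
    set w : Fin n → ℝ := d - P.mulVec d with hw
    have hPw : P.mulVec w = 0 := by
      rw [hw, Matrix.mulVec_sub, Matrix.mulVec_mulVec, hPP, sub_self]
    have hNw : N.mulVec w = 0 := by
      have h : w ⬝ᵥ N.mulVec w = 0 := by
        conv_lhs => rw [← hPN, ← Matrix.mulVec_mulVec, symm_dot_move hPs]
        rw [hPw, zero_dotProduct]
      have := (hN.dotProduct_mulVec_zero_iff w).mp (by simpa using h)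
      simpa using this
    have hdw : d ⬝ᵥ w = 0 := stepB w hNw
    have hPdw : (P.mulVec d) ⬝ᵥ w = 0 := by
      rw [← symm_dot_move hPs d w, hPw, dotProduct_zero]
    have hww : w ⬝ᵥ w = 0 := by
      have : w ⬝ᵥ w = d ⬝ᵥ w - (P.mulVec d) ⬝ᵥ w := by
        rw [hw, sub_dotProduct]
      rw [this, hdw, hPdw, sub_self]
    have hw0 : w = 0 := by
      ext i
      have hnn : ∀ j, 0 ≤ w j * w j := fun j => mul_self_nonneg _
      have := (Finset.sum_eq_zero_iff_of_nonneg (fun j _ => hnn j)).mp hww i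
        (Finset.mem_univ i)
      have := mul_self_eq_zero.mp this
      simpa using this
    have hPd : P.mulVec d = d := (sub_eq_zero.mp (hw ▸ hw0)).symm
    rw [Matrix.mulVec_mulVec, ← hPdef, hPd]
  set y : Fin n → ℝ := Np.mulVec d with hy
  set z : Fin n → ℝ := Mp.mulVec d with hz
  -- key identities
  have hNy : N.mulVec y = d := stepC
  have hMz : M.mulVec z = d := stepA
  -- d ⬝ Np d = y ⬝ d and y ⬝ N y = y ⬝ d
  have e1 : d ⬝ᵥ Np.mulVec d = y ⬝ᵥ d := dotProduct_comm d y
  have e2 : y ⬝ᵥ N.mulVec y = y ⬝ᵥ d := by rw [hNy]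
  -- Löwner: y ⬝ M y ≤ y ⬝ N y
  have e3 : y ⬝ᵥ M.mulVec y ≤ y ⬝ᵥ N.mulVec y := by
    have h3 : 0 ≤ y ⬝ᵥ (N - M).mulVec y := by simpa using hMN.dotProduct_mulVec_nonneg y
    have h4 : y ⬝ᵥ (N - M).mulVec y = y ⬝ᵥ N.mulVec y - y ⬝ᵥ M.mulVec y := by
      rw [Matrix.sub_mulVec, dotProduct_sub]
    linarith [h4 ▸ h3]
  -- expansion of (y - z) ⬝ M (y - z) ≥ 0
  have e4 : 0 ≤ y ⬝ᵥ M.mulVec y - 2 * (y ⬝ᵥ d) + d ⬝ᵥ Mp.mulVec d := by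
    have hpos : 0 ≤ (y - z) ⬝ᵥ M.mulVec (y - z) := by simpa using hM.dotProduct_mulVec_nonneg (y - z)
    have hyMz : y ⬝ᵥ M.mulVec z = y ⬝ᵥ d := by rw [hMz]
    have hzMy : z ⬝ᵥ M.mulVec y = y ⬝ᵥ d := by
      rw [symm_dot_move hMs z y, hMz, dotProduct_comm]
    have hzMz : z ⬝ᵥ M.mulVec z = d ⬝ᵥ Mp.mulVec d := by
      rw [hMz, hz, dotProduct_comm]
    have hexp : (y - z) ⬝ᵥ M.mulVec (y - z)
        = y ⬝ᵥ M.mulVec y - y ⬝ᵥ M.mulVec z - z ⬝ᵥ M.mulVec y + z ⬝ᵥ M.mulVec z := by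
      rw [Matrix.mulVec_sub, dotProduct_sub, sub_dotProduct,
        sub_dotProduct]
      ring
    rw [hexp, hyMz, hzMy, hzMz] at hpos
    linarith
  -- combine
  have : d ⬝ᵥ Np.mulVec d = 2 * (y ⬝ᵥ d) - y ⬝ᵥ N.mulVec y := by
    rw [e1, e2]; ring
  linarith [e3, e4, this]
end

section
/- (Randomized pseudoinverse formula.) Let A be a real m×n matrix, P a real m×p matrix, and Q a real n×q matrix. Then the Moore–Penrose pseudoinverse of A satisfies A⁺ = (PᵀA)⁺ Pᵀ A Q (AQ)⁺ if and only if P and Q preserve the rank of A, that is, rank(PᵀA) = rank(AQ) = rank(A). -/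
open Matrix

/-- If `rank (M * N) = rank M` then the column space of `M` is contained in that of `M * N`,
so `M` factors as `M * N * W`. -/
lemma exists_right_factor {a b c : ℕ} (M : Matrix (Fin a) (Fin b) ℝ)
    (N : Matrix (Fin b) (Fin c) ℝ) (h : (M * N).rank = M.rank) :
    ∃ W : Matrix (Fin c) (Fin b) ℝ, M * N * W = M := by
  have hle : LinearMap.range (M * N).mulVecLin ≤ LinearMap.range M.mulVecLin := by
    rw [Matrix.mulVecLin_mul]
    exact LinearMap.range_comp_le_range _ _
  have heq : LinearMap.range (M * N).mulVecLin = LinearMap.range M.mulVecLin :=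
    Submodule.eq_of_le_of_finrank_eq hle (by simpa [Matrix.rank] using h)
  have hcol : ∀ j : Fin b, ∃ w : Fin c → ℝ, (M * N) *ᵥ w = M *ᵥ Pi.single j 1 := by
    intro j
    have hm : M *ᵥ Pi.single j 1 ∈ LinearMap.range M.mulVecLin :=
      ⟨Pi.single j 1, rfl⟩
    rw [← heq] at hm
    exact hm
  choose w hw using hcol
  refine ⟨Matrix.of fun k j => w j k, ?_⟩
  ext i j
  have h1 := congrFun (hw j) i
  simp only [Matrix.mulVec_single, mul_one] at h1
  rw [Matrix.mul_apply]
  simpa [Matrix.mulVec, dotProduct] using h1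

/-- If `rank (Pᵀ * A) = rank A` then `A` factors as `W * (Pᵀ * A)`. -/
lemma exists_left_factor {m n p : ℕ} (A : Matrix (Fin m) (Fin n) ℝ)
    (P : Matrix (Fin m) (Fin p) ℝ) (h : (Pᵀ * A).rank = A.rank) :
    ∃ W : Matrix (Fin m) (Fin p) ℝ, W * (Pᵀ * A) = A := by
  have h' : (Aᵀ * P).rank = Aᵀ.rank := by
    have : (Aᵀ * P) = (Pᵀ * A)ᵀ := by simp [Matrix.transpose_mul]
    rw [this, Matrix.rank_transpose, Matrix.rank_transpose, h]
  obtain ⟨W, hW⟩ := exists_right_factor Aᵀ P h'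
  refine ⟨Wᵀ, ?_⟩
  have := congrArg Matrix.transpose hW
  simpa [Matrix.transpose_mul, Matrix.mul_assoc] using this

/-- Key lemma: if `rank (A * Q) = rank A` then `(A*Q)*(A*Q)⁺ = A*A⁺`. -/
lemma right_proj_eq {m n q : ℕ} (A : Matrix (Fin m) (Fin n) ℝ)
    (Q : Matrix (Fin n) (Fin q) ℝ) (Ap : Matrix (Fin n) (Fin m) ℝ)
    (H : Matrix (Fin q) (Fin m) ℝ) (hAp : IsMoorePenrose A Ap)
    (hH : IsMoorePenrose (A * Q) H) (h : (A * Q).rank = A.rank) :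
    A * Q * H = A * Ap := by
  obtain ⟨W, hW⟩ := exists_right_factor A Q h
  have e1 : A * Q * H * A = A := by
    calc A * Q * H * A = A * Q * H * (A * Q * W) := by rw [hW]
      _ = (A * Q * H * (A * Q)) * W := by simp only [Matrix.mul_assoc]
      _ = (A * Q) * W := by rw [hH.1]
      _ = A := hW
  have e2 : A * Ap * (A * Q) = A * Q := by
    calc A * Ap * (A * Q) = (A * Ap * A) * Q := by simp only [Matrix.mul_assoc]
      _ = A * Q := by rw [hAp.1]
  have key1 : (A * Ap) * (A * Q * H) = A * Q * H := by
    calc (A * Ap) * (A * Q * H) = (A * Ap * (A * Q)) * H := by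
          simp only [Matrix.mul_assoc]
      _ = A * Q * H := by rw [e2]
  have key2 : (A * Q * H) * (A * Ap) = A * Ap := by
    calc (A * Q * H) * (A * Ap) = (A * Q * H * A) * Ap := by
          simp only [Matrix.mul_assoc]
      _ = A * Ap := by rw [e1]
  calc A * Q * H = (A * Ap) * (A * Q * H) := key1.symm
    _ = ((A * Q * H) * (A * Ap))ᵀ := by
        rw [Matrix.transpose_mul, hAp.2.2.1, hH.2.2.1]
    _ = (A * Ap)ᵀ := by rw [key2]
    _ = A * Ap := hAp.2.2.1

/-- Key lemma: if `rank (Pᵀ * A) = rank A` then `(Pᵀ*A)⁺ * (Pᵀ*A) = A⁺*A`. -/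
lemma left_proj_eq {m n p : ℕ} (A : Matrix (Fin m) (Fin n) ℝ)
    (P : Matrix (Fin m) (Fin p) ℝ) (Ap : Matrix (Fin n) (Fin m) ℝ)
    (G : Matrix (Fin n) (Fin p) ℝ) (hAp : IsMoorePenrose A Ap)
    (hG : IsMoorePenrose (Pᵀ * A) G) (h : (Pᵀ * A).rank = A.rank) :
    G * (Pᵀ * A) = Ap * A := by
  obtain ⟨W, hW⟩ := exists_left_factor A P h
  have e1 : A * (G * (Pᵀ * A)) = A := by
    calc A * (G * (Pᵀ * A)) = (W * (Pᵀ * A)) * (G * (Pᵀ * A)) := by rw [hW]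
      _ = W * ((Pᵀ * A) * G * (Pᵀ * A)) := by simp only [Matrix.mul_assoc]
      _ = W * (Pᵀ * A) := by rw [hG.1]
      _ = A := hW
  have e2 : (Pᵀ * A) * (Ap * A) = Pᵀ * A := by
    calc (Pᵀ * A) * (Ap * A) = Pᵀ * (A * Ap * A) := by simp only [Matrix.mul_assoc]
      _ = Pᵀ * A := by rw [hAp.1]
  have key1 : (G * (Pᵀ * A)) * (Ap * A) = G * (Pᵀ * A) := by
    calc (G * (Pᵀ * A)) * (Ap * A) = G * ((Pᵀ * A) * (Ap * A)) := by
          simp only [Matrix.mul_assoc]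
      _ = G * (Pᵀ * A) := by rw [e2]
  have key2 : (Ap * A) * (G * (Pᵀ * A)) = Ap * A := by
    calc (Ap * A) * (G * (Pᵀ * A)) = Ap * (A * (G * (Pᵀ * A))) := by
          simp only [Matrix.mul_assoc]
      _ = Ap * A := by rw [e1]
  calc G * (Pᵀ * A) = (G * (Pᵀ * A)) * (Ap * A) := key1.symm
    _ = ((Ap * A) * (G * (Pᵀ * A)))ᵀ := by
        rw [Matrix.transpose_mul, hG.2.2.2, hAp.2.2.2]
    _ = (Ap * A)ᵀ := by rw [key2]
    _ = Ap * A := hAp.2.2.2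

/-- Randomized pseudoinverse formula: `A⁺ = (Pᵀ A)⁺ Pᵀ A Q (A Q)⁺` if and only if
`rank (Pᵀ A) = rank (A Q) = rank A`. -/
theorem randomized_pinv_iff_rank_preserving (m n p q : ℕ)
    (A : Matrix (Fin m) (Fin n) ℝ)
    (P : Matrix (Fin m) (Fin p) ℝ) (Q : Matrix (Fin n) (Fin q) ℝ)
    (Ap : Matrix (Fin n) (Fin m) ℝ)
    (G : Matrix (Fin n) (Fin p) ℝ) (H : Matrix (Fin q) (Fin m) ℝ)
    (hAp : IsMoorePenrose A Ap)
    (hG : IsMoorePenrose (Pᵀ * A) G) (hH : IsMoorePenrose (A * Q) H) :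
    Ap = G * (Pᵀ * A * Q) * H ↔
      ((Pᵀ * A).rank = A.rank ∧ (A * Q).rank = A.rank) := by
  constructor
  · intro hX
    have hA_le_Ap : A.rank ≤ Ap.rank := by
      calc A.rank = (A * (Ap * A)).rank := by
            rw [← Matrix.mul_assoc, hAp.1]
        _ ≤ (Ap * A).rank := Matrix.rank_mul_le_right _ _
        _ ≤ Ap.rank := Matrix.rank_mul_le_left _ _
    have hG_le : G.rank ≤ (Pᵀ * A).rank := by
      calc G.rank = (G * (Pᵀ * A) * G).rank := by rw [hG.2.1]
        _ ≤ (G * (Pᵀ * A)).rank := Matrix.rank_mul_le_left _ _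
        _ ≤ (Pᵀ * A).rank := Matrix.rank_mul_le_right _ _
    have hH_le : H.rank ≤ (A * Q).rank := by
      calc H.rank = (H * (A * Q) * H).rank := by
            have := hH.2.1
            rw [← Matrix.mul_assoc] at this ⊢
            rw [this]
        _ ≤ (H * (A * Q)).rank := Matrix.rank_mul_le_left _ _
        _ ≤ (A * Q).rank := Matrix.rank_mul_le_right _ _
    have hAp_le_G : Ap.rank ≤ G.rank := by
      rw [hX]
      calc (G * (Pᵀ * A * Q) * H).rank ≤ (G * (Pᵀ * A * Q)).rank :=
            Matrix.rank_mul_le_left _ _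
        _ ≤ G.rank := Matrix.rank_mul_le_left _ _
    have hAp_le_H : Ap.rank ≤ H.rank := by
      rw [hX]
      exact Matrix.rank_mul_le_right _ _
    constructor
    · exact le_antisymm (Matrix.rank_mul_le_right _ _)
        (le_trans hA_le_Ap (le_trans hAp_le_G hG_le))
    · exact le_antisymm (Matrix.rank_mul_le_left _ _)
        (le_trans hA_le_Ap (le_trans hAp_le_H hH_le))
  · rintro ⟨h1, h2⟩
    have L1 : G * (Pᵀ * A) = Ap * A := left_proj_eq A P Ap G hAp hG h1
    have L2 : A * Q * H = A * Ap := right_proj_eq A Q Ap H hAp hH h2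
    calc Ap = Ap * A * Ap := hAp.2.1.symm
      _ = Ap * (A * Q * H) := by rw [L2, Matrix.mul_assoc]
      _ = ((Ap * A) * Q) * H := by simp only [Matrix.mul_assoc]
      _ = G * (Pᵀ * A * Q) * H := by rw [← L1]; simp only [Matrix.mul_assoc]
end

section
/- Let A be a real m×n matrix and P a real m×p matrix with rank(PᵀA) = rank(A). Then the orthogonal projectors onto the row space of A and of PᵀA coincide: (PᵀA)⁺(PᵀA) = A⁺A, where ⁺ denotes the Moore–Penrose pseudoinverse. -/
open Matrix

/-- If `rank (Pᵀ A) = rank A`, then the orthogonal projectors onto the row spaces of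
`A` and of `Pᵀ A` coincide: `(Pᵀ A)⁺ (Pᵀ A) = A⁺ A`. -/
theorem row_space_projector_eq (m n p : ℕ)
    (A : Matrix (Fin m) (Fin n) ℝ) (P : Matrix (Fin m) (Fin p) ℝ)
    (Ap : Matrix (Fin n) (Fin m) ℝ) (G : Matrix (Fin n) (Fin p) ℝ)
    (hAp : IsMoorePenrose A Ap) (hG : IsMoorePenrose (Pᵀ * A) G)
    (hrank : (Pᵀ * A).rank = A.rank) :
    G * (Pᵀ * A) = Ap * A := by
  obtain ⟨hA1, hA2, hA3, hA4⟩ := hAp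
  obtain ⟨hB1, hB2, hB3, hB4⟩ := hG
  set B : Matrix (Fin p) (Fin n) ℝ := Pᵀ * A with hBdef
  -- range of Bᵀ equals range of Aᵀ
  have hle : LinearMap.range Bᵀ.mulVecLin ≤ LinearMap.range Aᵀ.mulVecLin := by
    have : Bᵀ = Aᵀ * P := by rw [hBdef, transpose_mul, transpose_transpose]
    rw [this, mulVecLin_mul]
    exact LinearMap.range_comp_le_range _ _
  have hfr : Module.finrank ℝ (LinearMap.range Aᵀ.mulVecLin)
      ≤ Module.finrank ℝ (LinearMap.range Bᵀ.mulVecLin) := by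
    have h1 : Bᵀ.rank = Aᵀ.rank := by
      rw [Matrix.rank_transpose, Matrix.rank_transpose, hrank]
    simpa [Matrix.rank] using h1.ge
  have hrange : LinearMap.range Bᵀ.mulVecLin = LinearMap.range Aᵀ.mulVecLin :=
    Submodule.eq_of_le_of_finrank_le hle hfr
  -- G * B fixes the range of Bᵀ
  have h2 : (G * B) * Bᵀ = Bᵀ := by
    have h := congrArg Matrix.transpose hB1
    rw [Matrix.mul_assoc, transpose_mul, hB4] at h
    exact h
  -- hence G * B fixes the range of Aᵀ, so (G*B) * Aᵀ = Aᵀ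
  have h3 : (G * B) * Aᵀ = Aᵀ := by
    apply Matrix.toLin'.injective
    apply LinearMap.ext
    intro v
    have hmem : Aᵀ.mulVec v ∈ LinearMap.range Bᵀ.mulVecLin := by
      rw [hrange]
      exact ⟨v, rfl⟩
    obtain ⟨w, hw⟩ := hmem
    simp only [Matrix.toLin'_apply]
    calc ((G * B) * Aᵀ) *ᵥ v = (G * B) *ᵥ (Aᵀ *ᵥ v) := by rw [← Matrix.mulVec_mulVec]
    _ = (G * B) *ᵥ (Bᵀ *ᵥ w) := by rw [← hw]; rfl
    _ = ((G * B) * Bᵀ) *ᵥ w := by rw [Matrix.mulVec_mulVec]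
    _ = Bᵀ *ᵥ w := by rw [h2]
    _ = Aᵀ *ᵥ v := by rw [← hw]; rfl
  have h4 : A * (G * B) = A := by
    have := congrArg Matrix.transpose h3
    rw [transpose_mul, transpose_transpose, hB4] at this
    exact this
  have h5 : B * (Ap * A) = B := by
    rw [hBdef, Matrix.mul_assoc, ← Matrix.mul_assoc A Ap A, hA1]
  have h6 : (G * B) * (Ap * A) = G * B := by
    rw [Matrix.mul_assoc, h5]
  have h7 : (Ap * A) * (G * B) = G * B := by
    have := congrArg Matrix.transpose h6
    rwa [transpose_mul, hA4, hB4] at this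
  have h8 : (Ap * A) * (G * B) = Ap * A := by
    calc (Ap * A) * (G * B) = Ap * (A * (G * B)) := by rw [Matrix.mul_assoc]
    _ = Ap * A := by rw [h4]
  rw [← h7, h8]
end

section
/- Let A be a real m×n matrix, P a real m×p matrix, and Q a real n×q matrix satisfying rank(PᵀA) = rank(AQ) = rank(A). Let G be any {1}-inverse of PᵀA (i.e. (PᵀA)G(PᵀA) = PᵀA) and H any {1}-inverse of AQ (i.e. (AQ)H(AQ) = AQ). Then A^g = G Pᵀ A Q H is a {1,2}-inverse of A; that is, A A^g A = A and A^g A A^g = A^g. -/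
open Matrix

lemma ext_of_mulVec {m n : ℕ} {M N : Matrix (Fin m) (Fin n) ℝ}
    (h : ∀ x, M.mulVec x = N.mulVec x) : M = N := by
  ext i j
  have := congrFun (h (Pi.single j 1)) i
  simpa [Matrix.mulVec_single] using this

/-- Key lemma: if `ker A ≤ ker B`, `rank B = rank A` and `B G B = B`, then `A G B = A`. -/
lemma aux {m n p : ℕ} (A : Matrix (Fin m) (Fin n) ℝ) (B : Matrix (Fin p) (Fin n) ℝ)
    (G : Matrix (Fin n) (Fin p) ℝ)
    (hk : LinearMap.ker A.mulVecLin ≤ LinearMap.ker B.mulVecLin)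
    (hr : B.rank = A.rank) (hGB : B * G * B = B) : A * G * B = A := by
  have hker : LinearMap.ker A.mulVecLin = LinearMap.ker B.mulVecLin := by
    apply Submodule.eq_of_le_of_finrank_le hk
    have hA := A.mulVecLin.finrank_range_add_finrank_ker
    have hB := B.mulVecLin.finrank_range_add_finrank_ker
    have : Matrix.rank A + Module.finrank ℝ (LinearMap.ker A.mulVecLin) =
        Matrix.rank B + Module.finrank ℝ (LinearMap.ker B.mulVecLin) := by
      rw [Matrix.rank, Matrix.rank, hA, hB]
    omega
  apply ext_of_mulVec
  intro x
  have h1 : B.mulVec ((G * B).mulVec x - x) = 0 := by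
    have := congrArg (fun M => Matrix.mulVec M x) hGB
    simp only [← Matrix.mulVec_mulVec] at this ⊢
    rw [Matrix.mulVec_sub]
    rw [Matrix.mulVec_mulVec] at this ⊢
    simpa [sub_eq_zero, Matrix.mulVec_mulVec, Matrix.mul_assoc] using this
  have h2 : A.mulVec ((G * B).mulVec x - x) = 0 := by
    have : ((G * B).mulVec x - x) ∈ LinearMap.ker B.mulVecLin := by
      simpa [Matrix.mulVecLin] using h1
    rw [← hker] at this
    simpa [Matrix.mulVecLin] using this
  have h3 : A.mulVec ((G * B).mulVec x) = A.mulVec x := by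
    rw [Matrix.mulVec_sub, sub_eq_zero] at h2
    exact h2
  calc (A * G * B).mulVec x = A.mulVec ((G * B).mulVec x) := by
        rw [Matrix.mulVec_mulVec, Matrix.mul_assoc]
      _ = A.mulVec x := h3

/-- If `rank (Pᵀ A) = rank (A Q) = rank A`, `G` is a `{1}`-inverse of `Pᵀ A` and `H` is a
`{1}`-inverse of `A Q`, then `A^g = G Pᵀ A Q H` is a `{1,2}`-inverse of `A`. -/
theorem randomized_one_two_inverse (m n p q : ℕ)
    (A : Matrix (Fin m) (Fin n) ℝ)
    (P : Matrix (Fin m) (Fin p) ℝ) (Q : Matrix (Fin n) (Fin q) ℝ)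
    (G : Matrix (Fin n) (Fin p) ℝ) (H : Matrix (Fin q) (Fin m) ℝ)
    (hrP : (Pᵀ * A).rank = A.rank) (hrQ : (A * Q).rank = A.rank)
    (hG : (Pᵀ * A) * G * (Pᵀ * A) = Pᵀ * A)
    (hH : (A * Q) * H * (A * Q) = A * Q) :
    A * (G * Pᵀ * A * Q * H) * A = A ∧
      (G * Pᵀ * A * Q * H) * A * (G * Pᵀ * A * Q * H) = G * Pᵀ * A * Q * H := by
  -- first key identity : A * G * (Pᵀ * A) = A
  have key1 : A * G * (Pᵀ * A) = A := by
    apply aux A (Pᵀ * A) G _ hrP hG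
    intro x hx
    simp only [LinearMap.mem_ker, Matrix.mulVecLin_apply] at hx ⊢
    rw [← Matrix.mulVec_mulVec, hx, Matrix.mulVec_zero]
  -- second key identity : A * Q * H * A = A, by transposing
  have key2 : A * Q * H * A = A := by
    have hr' : (Qᵀ * Aᵀ).rank = Aᵀ.rank := by
      rw [← Matrix.transpose_mul, Matrix.rank_transpose, Matrix.rank_transpose, hrQ]
    have hH' : (Qᵀ * Aᵀ) * Hᵀ * (Qᵀ * Aᵀ) = Qᵀ * Aᵀ := by
      simpa [Matrix.transpose_mul, Matrix.mul_assoc] using congrArg Matrix.transpose hH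
    have := aux Aᵀ (Qᵀ * Aᵀ) Hᵀ (by
      intro x hx
      simp only [LinearMap.mem_ker, Matrix.mulVecLin_apply] at hx ⊢
      rw [← Matrix.mulVec_mulVec, hx, Matrix.mulVec_zero]) hr' hH'
    have := congrArg Matrix.transpose this
    simpa [Matrix.transpose_mul, Matrix.mul_assoc] using this
  constructor
  · calc A * (G * Pᵀ * A * Q * H) * A
        = (A * G * (Pᵀ * A)) * Q * H * A := by simp only [Matrix.mul_assoc]
      _ = A * Q * H * A := by rw [key1]
      _ = A := key2
  · calc (G * Pᵀ * A * Q * H) * A * (G * Pᵀ * A * Q * H)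
        = G * Pᵀ * (A * Q * H * A) * G * (Pᵀ * A) * Q * H := by
          simp only [Matrix.mul_assoc]
      _ = G * ((Pᵀ * A) * G * (Pᵀ * A)) * Q * H := by
          rw [key2]; simp only [Matrix.mul_assoc]
      _ = G * Pᵀ * A * Q * H := by rw [hG]; simp only [Matrix.mul_assoc]
end

section
/- Let A be a real m×n matrix of rank r, P a real m×p matrix, and Q a real n×q matrix satisfying rank(PᵀA) = rank(AQ) = rank(A) = r. Let PᵀAQ = CR be a full rank factorization of the sketched matrix, where C is p×r with full column rank r and R is r×q with full row rank r. Then A^g = Q (CR)⁺ Pᵀ is a {1,2}-inverse of A; that is, A A^g A = A and A^g A A^g = A^g, where (CR)⁺ denotes the Moore–Penrose pseudoinverse of CR. -/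
open Matrix

/-- If `rank (A * Q) = rank A`, then the column space of `A * Q` equals that of `A`,
so there is a matrix `Y` with `A * Q * Y = A`. -/
lemma aux_exists_right {m n q : ℕ} (A : Matrix (Fin m) (Fin n) ℝ)
    (Q : Matrix (Fin n) (Fin q) ℝ) (h : (A * Q).rank = A.rank) :
    ∃ Y : Matrix (Fin q) (Fin n) ℝ, A * Q * Y = A := by
  have hle : LinearMap.range (A * Q).mulVecLin ≤ LinearMap.range A.mulVecLin := by
    rw [Matrix.mulVecLin_mul]
    exact LinearMap.range_comp_le_range _ _
  have heq : LinearMap.range (A * Q).mulVecLin = LinearMap.range A.mulVecLin := by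
    apply Submodule.eq_of_le_of_finrank_le hle
    exact le_of_eq h.symm
  choose v hv using fun j : Fin n =>
    (heq ▸ LinearMap.mem_range_self A.mulVecLin (Pi.single j 1) :
      A.mulVecLin (Pi.single j 1) ∈ LinearMap.range (A * Q).mulVecLin)
  refine ⟨Matrix.of fun k j => v j k, ?_⟩
  ext i j
  have := congrFun (hv j) i
  simp only [Matrix.mulVecLin_apply, Matrix.mulVec_single, mul_one] at this
  simpa [Matrix.mul_apply, Matrix.mulVec, dotProduct] using this

/-- If `rank (Pᵀ A) = rank (A Q) = rank A = r` and `Pᵀ A Q = C * R` is a full-rank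
factorization of the sketched matrix, then `A^g = Q (C R)⁺ Pᵀ` is a `{1,2}`-inverse
of `A`. -/
theorem sketched_full_rank_one_two_inverse (m n p q r : ℕ)
    (A : Matrix (Fin m) (Fin n) ℝ)
    (P : Matrix (Fin m) (Fin p) ℝ) (Q : Matrix (Fin n) (Fin q) ℝ)
    (C : Matrix (Fin p) (Fin r) ℝ) (R : Matrix (Fin r) (Fin q) ℝ)
    (W : Matrix (Fin q) (Fin p) ℝ)
    (hr : A.rank = r) (hrP : (Pᵀ * A).rank = A.rank) (hrQ : (A * Q).rank = A.rank)
    (hfact : Pᵀ * A * Q = C * R)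
    (hC : LinearIndependent ℝ (fun j : Fin r => fun i : Fin p => C i j))
    (hR : LinearIndependent ℝ (fun i : Fin r => R i))
    (hW : IsMoorePenrose (C * R) W) :
    A * (Q * W * Pᵀ) * A = A ∧
      (Q * W * Pᵀ) * A * (Q * W * Pᵀ) = Q * W * Pᵀ := by
  obtain ⟨Y, hY⟩ := aux_exists_right A Q hrQ
  have hT : (Aᵀ * P).rank = Aᵀ.rank := by
    rw [show Aᵀ * P = (Pᵀ * A)ᵀ by simp [Matrix.transpose_mul],
      Matrix.rank_transpose, Matrix.rank_transpose, hrP]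
  obtain ⟨Y', hY'⟩ := aux_exists_right Aᵀ P hT
  set X := Y'ᵀ with hXdef
  have hX : X * (Pᵀ * A) = A := by
    have := congrArg Matrix.transpose hY'
    simpa [Matrix.transpose_mul, Matrix.mul_assoc] using this
  have h1 : (Pᵀ * A * Q) * W * (Pᵀ * A * Q) = Pᵀ * A * Q := by
    rw [hfact]; exact hW.1
  have h2 : W * (Pᵀ * A * Q) * W = W := by
    rw [hfact]; exact hW.2.1
  have hAQ : X * (Pᵀ * A * Q) = A * Q := by
    rw [← Matrix.mul_assoc, hX]
  have hPA : (Pᵀ * A * Q) * Y = Pᵀ * A := by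
    rw [Matrix.mul_assoc Pᵀ A Q, Matrix.mul_assoc, hY]
  constructor
  · calc A * (Q * W * Pᵀ) * A = (A * Q) * W * (Pᵀ * A) := by
          simp only [Matrix.mul_assoc]
      _ = (X * (Pᵀ * A * Q)) * W * ((Pᵀ * A * Q) * Y) := by rw [hAQ, hPA]
      _ = X * ((Pᵀ * A * Q) * W * (Pᵀ * A * Q)) * Y := by
          simp only [Matrix.mul_assoc]
      _ = X * (Pᵀ * A * Q) * Y := by rw [h1]
      _ = (A * Q) * Y := by rw [hAQ]
      _ = A := hY
  · calc (Q * W * Pᵀ) * A * (Q * W * Pᵀ) = Q * (W * (Pᵀ * A * Q) * W) * Pᵀ := by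
          simp only [Matrix.mul_assoc]
      _ = Q * W * Pᵀ := by rw [h2, Matrix.mul_assoc]
end

section
/- Let L be an n×n real symmetric positive semidefinite matrix with L·1 = 0 and rank(L) = n−1 (the weighted Laplacian of a connected graph). For distinct nodes i and j, let R_ij = (e_i − e_j)ᵀ L⁺ (e_i − e_j) be the effective resistance and let R̃_ij = dᵀ (L_SS)⁺ d be its principal-submatrix approximation, where L_SS is the 2×2 matrix [[L_ii, L_ij],[L_ji, L_jj]] and d = (1, −1)ᵀ. Then R̃_ij ≤ R_ij for all distinct i, j; that is, the approximation always underestimates the true effective resistance. -/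
open Matrix

open Module

/-- The sum-of-coordinates functional as a linear map. -/
noncomputable def sumLin (m : ℕ) : (Fin m → ℝ) →ₗ[ℝ] ℝ where
  toFun x := x ⬝ᵥ fun _ => 1
  map_add' x y := add_dotProduct x y _
  map_smul' c x := smul_dotProduct c x _

lemma exists_mulVec_eq {m : ℕ} (hm : 0 < m) (A : Matrix (Fin m) (Fin m) ℝ)
    (hA : Aᵀ = A) (hone : A *ᵥ (fun _ => (1:ℝ)) = 0)
    (hr : finrank ℝ (LinearMap.range A.mulVecLin) = m - 1)
    (b : Fin m → ℝ) (hb : b ⬝ᵥ (fun _ => (1:ℝ)) = 0) : ∃ u, A *ᵥ u = b := by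
  have hsurj : Function.Surjective (sumLin m) := by
    intro c
    refine ⟨Pi.single ⟨0, hm⟩ c, ?_⟩
    simp [sumLin, single_dotProduct]
  have hrn := LinearMap.finrank_range_add_finrank_ker (sumLin m)
  rw [LinearMap.range_eq_top.2 hsurj, finrank_top, finrank_self,
    Module.finrank_pi, Fintype.card_fin] at hrn
  have hker : finrank ℝ (LinearMap.ker (sumLin m)) = m - 1 := by omega
  have hle : LinearMap.range A.mulVecLin ≤ LinearMap.ker (sumLin m) := by
    rintro x ⟨u, rfl⟩
    show (A.mulVecLin u) ⬝ᵥ (fun _ => (1:ℝ)) = 0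
    rw [Matrix.mulVecLin_apply, dotProduct_comm, Matrix.dotProduct_mulVec,
      ← Matrix.mulVec_transpose, hA, hone]
    simp
  have heq : LinearMap.range A.mulVecLin = LinearMap.ker (sumLin m) :=
    Submodule.eq_of_le_of_finrank_le hle (by rw [hr, hker])
  have : b ∈ LinearMap.range A.mulVecLin := by
    rw [heq]; exact hb
  obtain ⟨u, hu⟩ := this
  exact ⟨u, hu⟩

lemma ker_const {m : ℕ} (hm : 0 < m) (A : Matrix (Fin m) (Fin m) ℝ)
    (hone : A *ᵥ (fun _ => (1:ℝ)) = 0)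
    (hr : finrank ℝ (LinearMap.range A.mulVecLin) = m - 1)
    (x : Fin m → ℝ) (hx : A *ᵥ x = 0) : ∀ k l, x k = x l := by
  have honemem : (fun _ => (1:ℝ)) ∈ LinearMap.ker A.mulVecLin := by
    show A.mulVecLin _ = 0
    rw [Matrix.mulVecLin_apply, hone]
  have hspan : Submodule.span ℝ {(fun _ => (1:ℝ) : Fin m → ℝ)} ≤ LinearMap.ker A.mulVecLin :=
    (Submodule.span_singleton_le_iff_mem _ _).2 honemem
  have hrn := LinearMap.finrank_range_add_finrank_ker A.mulVecLin
  rw [hr, Module.finrank_pi, Fintype.card_fin] at hrn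
  have hone_ne : (fun _ => (1:ℝ) : Fin m → ℝ) ≠ 0 := by
    intro h
    have := congrFun h ⟨0, hm⟩
    norm_num at this
  have hspanrank : finrank ℝ (Submodule.span ℝ {(fun _ => (1:ℝ) : Fin m → ℝ)}) = 1 :=
    finrank_span_singleton hone_ne
  have heq : Submodule.span ℝ {(fun _ => (1:ℝ) : Fin m → ℝ)} = LinearMap.ker A.mulVecLin :=
    Submodule.eq_of_le_of_finrank_le hspan (by rw [hspanrank]; omega)
  have hxmem : x ∈ Submodule.span ℝ {(fun _ => (1:ℝ) : Fin m → ℝ)} := by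
    rw [heq]
    show A.mulVecLin x = 0
    rw [Matrix.mulVecLin_apply, hx]
  obtain ⟨c, hc⟩ := Submodule.mem_span_singleton.1 hxmem
  intro k l
  rw [← hc]
  simp

lemma key_ineq {m : ℕ} (L : Matrix (Fin m) (Fin m) ℝ) (hL : L.PosSemidef) (hsym : Lᵀ = L)
    (d x z : Fin m → ℝ) (hz : L *ᵥ z = d) :
    2 * (d ⬝ᵥ x) - x ⬝ᵥ L *ᵥ x ≤ d ⬝ᵥ z := by
  have key : (0:ℝ) ≤ (x - z) ⬝ᵥ L *ᵥ (x - z) := by simpa using hL.dotProduct_mulVec_nonneg (x - z)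
  have h1 : x ⬝ᵥ L *ᵥ z = x ⬝ᵥ d := by rw [hz]
  have h2 : z ⬝ᵥ L *ᵥ x = d ⬝ᵥ x := by
    rw [Matrix.dotProduct_mulVec, ← Matrix.mulVec_transpose, hsym, hz]
  have h3 : z ⬝ᵥ L *ᵥ z = d ⬝ᵥ z := by
    rw [Matrix.dotProduct_mulVec, ← Matrix.mulVec_transpose, hsym, hz]
  have hexp : (x - z) ⬝ᵥ L *ᵥ (x - z) =
      x ⬝ᵥ L *ᵥ x - x ⬝ᵥ L *ᵥ z - z ⬝ᵥ L *ᵥ x + z ⬝ᵥ L *ᵥ z := by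
    rw [Matrix.mulVec_sub, dotProduct_sub, sub_dotProduct, sub_dotProduct]
    ring
  have h4 : x ⬝ᵥ d = d ⬝ᵥ x := dotProduct_comm _ _
  rw [hexp, h1, h2, h3, h4] at key
  linarith

/-- The principal-submatrix approximation `R̃_ij = dᵀ (L_SS)⁺ d` always underestimates the
true effective resistance `R_ij = (e_i - e_j)ᵀ L⁺ (e_i - e_j)` of a connected graph
Laplacian `L`. -/
theorem effective_resistance_underestimate (n : ℕ)
    (L : Matrix (Fin n) (Fin n) ℝ)
    (hL : L.PosSemidef) (h1 : L.mulVec (fun _ => (1 : ℝ)) = 0)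
    (hrank : L.rank = n - 1)
    (i j : Fin n) (hij : i ≠ j)
    (Lp : Matrix (Fin n) (Fin n) ℝ) (hLp : IsMoorePenrose L Lp)
    (Sp : Matrix (Fin 2) (Fin 2) ℝ)
    (hSp : IsMoorePenrose !![L i i, L i j; L j i, L j j] Sp) :
    ![(1 : ℝ), -1] ⬝ᵥ Sp.mulVec ![(1 : ℝ), -1] ≤
      (Pi.single i 1 - Pi.single j 1) ⬝ᵥ
        Lp.mulVec (Pi.single i 1 - Pi.single j 1) := by
  have hn : 0 < n := i.pos
  have hsym : Lᵀ = L := by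
    have := hL.1
    simpa [Matrix.IsHermitian, Matrix.conjTranspose_eq_transpose_of_trivial] using this
  have hr : finrank ℝ (LinearMap.range L.mulVecLin) = n - 1 := hrank
  have hij' : L i j = L j i := congrFun (congrFun hsym j) i
  set L₂ : Matrix (Fin 2) (Fin 2) ℝ := !![L i i, L i j; L j i, L j j] with hL₂
  have hL₂sym : L₂ᵀ = L₂ := by
    ext a b
    fin_cases a <;> fin_cases b <;> simp [hL₂, hij']
  -- d is in the range of L
  have hdsum : ((Pi.single i 1 - Pi.single j 1 : Fin n → ℝ)) ⬝ᵥ (fun _ => (1:ℝ)) = 0 := by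
    simp [sub_dotProduct, single_dotProduct]
  obtain ⟨u, hu⟩ := exists_mulVec_eq hn L hsym h1 hr _ hdsum
  have hF1 : L *ᵥ (Lp *ᵥ (Pi.single i 1 - Pi.single j 1)) = Pi.single i 1 - Pi.single j 1 := by
    rw [← hu, Matrix.mulVec_mulVec, Matrix.mulVec_mulVec, hLp.1]
  -- quadratic form expansion helper
  have expand : ∀ a b : ℝ,
      (a • (Pi.single i 1 : Fin n → ℝ) + b • (Pi.single j 1 : Fin n → ℝ)) ⬝ᵥ
        L *ᵥ (a • (Pi.single i 1 : Fin n → ℝ) + b • (Pi.single j 1 : Fin n → ℝ)) =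
      a * (L i i * a + L i j * b) + b * (L j i * a + L j j * b) := by
    intro a b
    simp [Matrix.mulVec_add, Matrix.mulVec_smul, Matrix.mulVec_single,
      dotProduct_add, add_dotProduct, smul_dotProduct, dotProduct_smul,
      single_dotProduct, smul_eq_mul]
    try ring
  have expand2 : ∀ v : Fin 2 → ℝ, v ⬝ᵥ L₂ *ᵥ v =
      v 0 * (L i i * v 0 + L i j * v 1) + v 1 * (L j i * v 0 + L j j * v 1) := by
    intro v
    simp [hL₂, Matrix.mulVec, dotProduct, Fin.sum_univ_two]
    try ring
  -- kernel elements of L₂ have equal coordinates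
  have hker2 : ∀ w : Fin 2 → ℝ, L₂ *ᵥ w = 0 → w 0 = w 1 := by
    intro w hw
    have hquad : ((w 0 • (Pi.single i 1 : Fin n → ℝ) + w 1 • (Pi.single j 1 : Fin n → ℝ) : Fin n → ℝ)) ⬝ᵥ
        L *ᵥ (w 0 • (Pi.single i 1 : Fin n → ℝ) + w 1 • (Pi.single j 1 : Fin n → ℝ)) = 0 := by
      rw [expand, ← expand2 w, hw]
      simp
    have hLxw : L *ᵥ (w 0 • (Pi.single i 1 : Fin n → ℝ) + w 1 • (Pi.single j 1 : Fin n → ℝ)) = 0 :=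
      (hL.dotProduct_mulVec_zero_iff _).1 (by simpa using hquad)
    have := ker_const hn L h1 hr _ hLxw i j
    simpa [Pi.single_apply, hij, hij.symm] using this
  -- d₂ is in the range of L₂
  have hd₂ex : ∃ y, L₂ *ᵥ y = ![(1:ℝ), -1] := by
    by_cases hk : LinearMap.ker L₂.mulVecLin = ⊥
    · have hinj : Function.Injective L₂.mulVecLin := LinearMap.ker_eq_bot.1 hk
      have hsurj := LinearMap.injective_iff_surjective.1 hinj
      obtain ⟨y, hy⟩ := hsurj ![(1:ℝ), -1]
      exact ⟨y, by rw [← Matrix.mulVecLin_apply, hy]⟩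
    · obtain ⟨v, hv, hvne⟩ := Submodule.exists_mem_ne_zero_of_ne_bot hk
      have hv' : L₂ *ᵥ v = 0 := hv
      have hv01 : v 0 = v 1 := hker2 v hv'
      have hv0ne : v 0 ≠ 0 := by
        intro h0
        apply hvne
        funext k
        fin_cases k
        · exact h0
        · show v 1 = 0
          rw [← hv01]; exact h0
      have honeker : L₂ *ᵥ (fun _ => (1:ℝ)) = 0 := by
        have heq1 : (fun _ => (1:ℝ) : Fin 2 → ℝ) = (v 0)⁻¹ • v := by
          funext k
          fin_cases k
          · show (1:ℝ) = (v 0)⁻¹ * v 0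
            rw [inv_mul_cancel₀ hv0ne]
          · show (1:ℝ) = (v 0)⁻¹ * v 1
            rw [← hv01, inv_mul_cancel₀ hv0ne]
        rw [heq1, Matrix.mulVec_smul, hv', smul_zero]
      have hone2ne : (fun _ => (1:ℝ) : Fin 2 → ℝ) ≠ 0 := by
        intro h; have := congrFun h 0; norm_num at this
      have hkerle : LinearMap.ker L₂.mulVecLin ≤
          Submodule.span ℝ {(fun _ => (1:ℝ) : Fin 2 → ℝ)} := by
        intro w hw
        have hw' : L₂ *ᵥ w = 0 := hw
        have h01 := hker2 w hw'
        refine Submodule.mem_span_singleton.2 ⟨w 0, ?_⟩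
        funext k
        fin_cases k
        · show w 0 * 1 = w 0
          rw [mul_one]
        · show w 0 * 1 = w 1
          rw [mul_one, h01]
      have hspanle : Submodule.span ℝ {(fun _ => (1:ℝ) : Fin 2 → ℝ)} ≤
          LinearMap.ker L₂.mulVecLin :=
        (Submodule.span_singleton_le_iff_mem _ _).2 (by
          show L₂.mulVecLin _ = 0
          rw [Matrix.mulVecLin_apply, honeker])
      have hkereq := le_antisymm hkerle hspanle
      have hkerrank : finrank ℝ (LinearMap.ker L₂.mulVecLin) = 1 := by
        rw [hkereq]; exact finrank_span_singleton hone2ne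
      have hrn := LinearMap.finrank_range_add_finrank_ker L₂.mulVecLin
      rw [hkerrank, Module.finrank_pi, Fintype.card_fin] at hrn
      have hr2 : finrank ℝ (LinearMap.range L₂.mulVecLin) = 2 - 1 := by omega
      exact exists_mulVec_eq (by norm_num) L₂ hL₂sym honeker hr2 ![(1:ℝ), -1]
        (by simp [dotProduct, Fin.sum_univ_two])
  obtain ⟨y', hy'⟩ := hd₂ex
  have hF2 : L₂ *ᵥ (Sp *ᵥ ![(1:ℝ), -1]) = ![(1:ℝ), -1] := by
    rw [← hy', Matrix.mulVec_mulVec, Matrix.mulVec_mulVec, hSp.1]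
  -- abbreviations
  set y : Fin 2 → ℝ := Sp *ᵥ ![(1:ℝ), -1] with hy
  have hxLx : ((y 0 • (Pi.single i 1 : Fin n → ℝ) + y 1 • (Pi.single j 1 : Fin n → ℝ) : Fin n → ℝ)) ⬝ᵥ
      L *ᵥ (y 0 • (Pi.single i 1 : Fin n → ℝ) + y 1 • (Pi.single j 1 : Fin n → ℝ)) = y 0 - y 1 := by
    rw [expand, ← expand2 y, hF2]
    simp [dotProduct, Fin.sum_univ_two]
    try ring
  have hdx : ((Pi.single i 1 - Pi.single j 1 : Fin n → ℝ)) ⬝ᵥ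
      (y 0 • (Pi.single i 1 : Fin n → ℝ) + y 1 • (Pi.single j 1 : Fin n → ℝ)) = y 0 - y 1 := by
    simp [sub_dotProduct, dotProduct_add, dotProduct_smul,
      dotProduct_single, single_dotProduct, Pi.single_apply, hij, hij.symm]
    try ring
  have hlhs : ![(1:ℝ), -1] ⬝ᵥ y = y 0 - y 1 := by
    simp [dotProduct, Fin.sum_univ_two]
    try ring
  have hmain := key_ineq L hL hsym (Pi.single i 1 - Pi.single j 1)
    (y 0 • (Pi.single i 1 : Fin n → ℝ) + y 1 • (Pi.single j 1 : Fin n → ℝ))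
    (Lp *ᵥ (Pi.single i 1 - Pi.single j 1)) hF1
  rw [hdx, hxLx] at hmain
  show ![(1:ℝ), -1] ⬝ᵥ y ≤ _
  rw [hlhs]
  linarith
end
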